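/- Let H be a Hilbert space, V ⊆ H a closed subspace, L : H → ℝ^m continuous linear with V ∩ ker(L) = {0} and the compatibility indicator μ = sup{‖u‖/‖u − P_V u‖ : u ∈ ker(L), u ≠ 0} finite. Let y ∈ range(L), ε > 0, and f̂ the minimizer of ‖f − P_V f‖ subject to L(f) = y, assumed to satisfy ‖f̂ − P_V f̂‖ ≤ ε. Then for every z ∈ H, sup{‖f − f̂‖ : ‖f − P_V f‖ ≤ ε, L(f) = y} ≤ sup{‖f − z‖ : ‖f − P_V f‖ ≤ ε, L(f) = y}. -/

import Mathlib

theorem stmt_17 {H : Type*} [NormedAddCommGroup H] [InnerProductSpace ℝ H]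
    {m : ℕ} (V : Submodule ℝ H) [CompleteSpace V]
    (L : H →L[ℝ] EuclideanSpace ℝ (Fin m))
    (hVL : V ⊓ LinearMap.ker (L : H →ₗ[ℝ] EuclideanSpace ℝ (Fin m)) = ⊥)
    (μ : ℝ) (hμ : ∀ u ∈ LinearMap.ker (L : H →ₗ[ℝ] EuclideanSpace ℝ (Fin m)), u ≠ 0 →
      ‖u‖ ≤ μ * ‖u - (V.orthogonalProjectionOnto u : H)‖)
    (y : EuclideanSpace ℝ (Fin m)) (hy : y ∈ LinearMap.range (L : H →ₗ[ℝ] EuclideanSpace ℝ (Fin m)))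
    (ε : ℝ) (hε : 0 < ε)
    (fhat : H) (hdata : L fhat = y)
    (hmin : ∀ f : H, L f = y →
      ‖fhat - (V.orthogonalProjectionOnto fhat : H)‖ ≤ ‖f - (V.orthogonalProjectionOnto f : H)‖)
    (hmodel : ‖fhat - (V.orthogonalProjectionOnto fhat : H)‖ ≤ ε) :
    ∀ z : H,
      (⨆ f ∈ {f : H | L f = y ∧ ‖f - (V.orthogonalProjectionOnto f : H)‖ ≤ ε},
          (‖f - fhat‖₊ : ENNReal)) ≤
      ⨆ f ∈ {f : H | L f = y ∧ ‖f - (V.orthogonalProjectionOnto f : H)‖ ≤ ε},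
          (‖f - z‖₊ : ENNReal) := by
  intro z
  set e : H := fhat - (V.orthogonalProjectionOnto fhat : H) with he
  -- key orthogonality: e ⟂ (u - P u) for u ∈ ker L
  have key : ∀ u ∈ LinearMap.ker (L : H →ₗ[ℝ] EuclideanSpace ℝ (Fin m)),
      (inner ℝ e (u - (V.orthogonalProjectionOnto u : H)) : ℝ) = 0 := by
    intro u hu
    set w : H := u - (V.orthogonalProjectionOnto u : H) with hw
    have hnorm : ∀ t : ℝ, ‖e‖ ≤ ‖e + t • w‖ := by
      intro t
      have hL : L (fhat + t • u) = y := by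
        have : L u = 0 := LinearMap.mem_ker.mp hu
        simp [map_add, map_smul, hdata, this]
      have h1 := hmin (fhat + t • u) hL
      have hP : (fhat + t • u) - (V.orthogonalProjectionOnto (fhat + t • u) : H)
          = e + t • w := by
        have : V.orthogonalProjectionOnto (fhat + t • u)
            = V.orthogonalProjectionOnto fhat + t • V.orthogonalProjectionOnto u := by
          rw [map_add, map_smul]
        rw [this, he, hw]
        push_cast
        module
      rwa [hP] at h1
    by_cases hw0 : w = 0
    · simp [hw0]
    · by_contra hc
      set c : ℝ := inner ℝ e w with hcdef
      have hwpos : (0:ℝ) < ‖w‖ ^ 2 := pow_pos (norm_pos_iff.mpr hw0) 2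
      set s : ℝ := ‖w‖ ^ 2 with hs
      have ht := hnorm (-c / s)
      have hsq : ‖e‖ ^ 2 ≤ ‖e + (-c / s) • w‖ ^ 2 := by
        have := norm_nonneg e
        nlinarith [norm_nonneg (e + (-c / s) • w)]
      rw [norm_add_sq_real, real_inner_smul_right, norm_smul] at hsq
      rw [Real.norm_eq_abs, mul_pow, sq_abs, ← hcdef, ← hs] at hsq
      have hc0 : c ≠ 0 := hc
      have hsne : s ≠ 0 := ne_of_gt hwpos
      have e1 : (-c / s) ^ 2 * s = c ^ 2 / s := by field_simp
      have e2 : 2 * (-c / s * c) = -(2 * c ^ 2 / s) := by ring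
      rw [e1, e2] at hsq
      have hcpos : 0 < c ^ 2 / s := div_pos (by positivity) hwpos
      have e3 : 2 * c ^ 2 / s = 2 * (c ^ 2 / s) := by ring
      linarith
  -- main argument
  refine iSup₂_le fun f hf => ?_
  obtain ⟨hLf, hεf⟩ := hf
  set u : H := f - fhat with hu
  have huk : u ∈ LinearMap.ker (L : H →ₗ[ℝ] EuclideanSpace ℝ (Fin m)) := by
    simp [hu, map_sub, hLf, hdata]
  set w : H := u - (V.orthogonalProjectionOnto u : H) with hw
  have hinner : (inner ℝ e w : ℝ) = 0 := key u huk
  set f' : H := fhat - u with hf'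
  have hLf' : L f' = y := by
    have : L u = 0 := LinearMap.mem_ker.mp huk
    simp [hf', map_sub, hdata, this]
  have hfP : f - (V.orthogonalProjectionOnto f : H) = e + w := by
    have : V.orthogonalProjectionOnto f
        = V.orthogonalProjectionOnto fhat + V.orthogonalProjectionOnto u := by
      rw [← map_add]; congr 1; rw [hu]; abel
    rw [this, he, hw, hu]; push_cast; abel
  have hf'P : f' - (V.orthogonalProjectionOnto f' : H) = e - w := by
    have : V.orthogonalProjectionOnto f'
        = V.orthogonalProjectionOnto fhat - V.orthogonalProjectionOnto u := by
      rw [← map_sub]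
    rw [this, he, hw, hf', hu]; push_cast; abel
  have hnormeq : ‖e - w‖ = ‖e + w‖ := by
    have h1 : ‖e - w‖ ^ 2 = ‖e + w‖ ^ 2 := by
      rw [norm_sub_sq_real, norm_add_sq_real, hinner]; ring
    have := norm_nonneg (e - w)
    have := norm_nonneg (e + w)
    nlinarith
  have hεf' : ‖f' - (V.orthogonalProjectionOnto f' : H)‖ ≤ ε := by
    rw [hf'P, hnormeq, ← hfP]; exact hεf
  -- ‖f - fhat‖ ≤ max ‖f - z‖ ‖f' - z‖
  have hdist : ‖f - fhat‖ ≤ max ‖f - z‖ ‖f' - z‖ := by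
    have h2 : f - f' = (2:ℝ) • (f - fhat) := by rw [hf', hu]; module
    have h3 : ‖f - f'‖ ≤ ‖f - z‖ + ‖f' - z‖ := by
      have : f - f' = (f - z) - (f' - z) := by abel
      rw [this]; exact norm_sub_le _ _
    rw [h2, norm_smul] at h3
    simp only [Real.norm_ofNat] at h3
    rcases le_total ‖f - z‖ ‖f' - z‖ with h | h
    · exact le_trans (by linarith) (le_max_right _ _)
    · exact le_trans (by linarith) (le_max_left _ _)
  rcases le_total ‖f - z‖ ‖f' - z‖ with h | h
  · calc (‖f - fhat‖₊ : ENNReal) ≤ (‖f' - z‖₊ : ENNReal) := by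
          rw [max_eq_right h] at hdist
          exact_mod_cast hdist
      _ ≤ _ := le_iSup₂_of_le f' ⟨hLf', hεf'⟩ le_rfl
  · calc (‖f - fhat‖₊ : ENNReal) ≤ (‖f - z‖₊ : ENNReal) := by
          rw [max_eq_left h] at hdist
          exact_mod_cast hdist
      _ ≤ _ := le_iSup₂_of_le f ⟨hLf, hεf⟩ le_rfl
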